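/- Let w₁,…,w_N be scalar weights on (x₀,x₁) with monic orthogonal polynomial sequences pⁱ, and let Qₙ and W be constructed from them as in the setup. Then for every n ≥ 0, ∫_{x₀}^{x₁} Qₙ(x) W(x) Qₙ(x)ᵀ dx = ‖Pₙ‖² + A‖Pₙ₊₁‖²Aᵀ + ‖Pₙ‖²Aᵀ‖Pₙ₋₁‖⁻²A‖Pₙ‖² (with the convention ‖P₋₁‖⁻² = 0 for n = 0). -/

import Mathlib

open MeasureTheory Matrix Polynomial

noncomputable section

/-- The staircase nilpotent matrix `A = ∑ a_{2j-1} E_{2j-1,2j} + ∑ a_{2j} E_{2j+1,2j}`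
(1-based indices, here realized with 0-based `Fin N` indices). -/
def nilA (N : ℕ) (a : ℕ → ℝ) : Matrix (Fin N) (Fin N) ℝ :=
  Matrix.of fun i k =>
    if k.val % 2 = 1 ∧ i.val + 1 = k.val then a k.val
    else if k.val % 2 = 1 ∧ i.val = k.val + 1 then a i.val
    else 0

/-- `Pₙ(x) = diag(pₙ¹(x), …, pₙᴺ(x))`. -/
def diagP {N : ℕ} (p : Fin N → ℕ → Polynomial ℝ) (n : ℕ) (x : ℝ) :
    Matrix (Fin N) (Fin N) ℝ :=
  Matrix.diagonal fun i => (p i n).eval x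

/-- `‖Pₙ‖² = diag(‖pₙ¹‖², …, ‖pₙᴺ‖²)` where `‖pₙⁱ‖² = ∫_S pₙⁱ(x)² wᵢ(x) dx`. -/
def nsq {N : ℕ} (S : Set ℝ) (w : Fin N → ℝ → ℝ) (p : Fin N → ℕ → Polynomial ℝ)
    (n : ℕ) : Matrix (Fin N) (Fin N) ℝ :=
  Matrix.diagonal fun i => ∫ x in S, (p i n).eval x ^ 2 * w i x

/-- The matrix polynomials
`Qₙ(x) = Pₙ(x) + A Pₙ₊₁(x) − ‖Pₙ‖² Aᵀ ‖Pₙ₋₁‖⁻² Pₙ₋₁(x) − Pₙ(x) A x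
        + ‖Pₙ‖² Aᵀ ‖Pₙ₋₁‖⁻² Pₙ₋₁(x) A x`,
with the terms containing `‖P₋₁‖⁻²` set to `0` when `n = 0`. -/
def matQ {N : ℕ} (S : Set ℝ) (w : Fin N → ℝ → ℝ) (p : Fin N → ℕ → Polynomial ℝ)
    (a : ℕ → ℝ) (n : ℕ) (x : ℝ) : Matrix (Fin N) (Fin N) ℝ :=
  let A := nilA N a
  let C : Matrix (Fin N) (Fin N) ℝ :=
    if n = 0 then 0 else nsq S w p n * Aᵀ * (nsq S w p (n - 1))⁻¹
  diagP p n x + A * diagP p (n + 1) x - C * diagP p (n - 1) x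
    - x • (diagP p n x * A) + x • (C * diagP p (n - 1) x * A)

/-- `W(x) = T(x) diag(w₁(x), …, w_N(x)) T(x)ᵀ` with `T(x) = I + Ax`. -/
def matW {N : ℕ} (w : Fin N → ℝ → ℝ) (a : ℕ → ℝ) (x : ℝ) :
    Matrix (Fin N) (Fin N) ℝ :=
  (1 + x • nilA N a) * Matrix.diagonal (fun i => w i x) * (1 + x • nilA N a)ᵀ

/- ### Auxiliary lemmas -/

lemma nilA_even {N : ℕ} {a : ℕ → ℝ} {i k : Fin N} (h : k.val % 2 = 0) :
    nilA N a i k = 0 := by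
  simp only [nilA, Matrix.of_apply]
  rw [if_neg (by omega), if_neg (by omega)]

lemma nilA_odd {N : ℕ} {a : ℕ → ℝ} {i k : Fin N} (h : k.val % 2 = 1) :
    nilA N a k i = 0 := by
  simp only [nilA, Matrix.of_apply]
  rw [if_neg (by omega), if_neg (by omega)]

lemma nilA_diag_nilA (N : ℕ) (a : ℕ → ℝ) (d : Fin N → ℝ) :
    nilA N a * Matrix.diagonal d * nilA N a = 0 := by
  ext i l
  rw [Matrix.mul_assoc, Matrix.mul_apply]
  apply Finset.sum_eq_zero
  intro k _
  rcases Nat.even_or_odd k.val with h | h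
  · rw [nilA_even (Nat.even_iff.mp h)]; ring
  · rw [Matrix.diagonal_mul, nilA_odd (Nat.odd_iff.mp h)]
    simp

lemma nilA_sq (N : ℕ) (a : ℕ → ℝ) : nilA N a * nilA N a = 0 := by
  have h := nilA_diag_nilA N a (fun _ => 1)
  rwa [Matrix.diagonal_one, mul_one] at h

lemma nilA_diagP_nilA {N : ℕ} (a : ℕ → ℝ) (p : Fin N → ℕ → Polynomial ℝ)
    (m : ℕ) (x : ℝ) : nilA N a * diagP p m x * nilA N a = 0 :=
  nilA_diag_nilA N a _

lemma diagP_transpose {N : ℕ} (p : Fin N → ℕ → Polynomial ℝ) (m : ℕ) (x : ℝ) :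
    (diagP p m x)ᵀ = diagP p m x :=
  Matrix.diagonal_transpose _

lemma integ_poly_mul (w : ℝ → ℝ) (hm : Measurable w)
    (hmom : ∀ n : ℕ, Integrable (fun x => |x| ^ n * w x)) (q : Polynomial ℝ) :
    Integrable (fun x => q.eval x * w x) := by
  apply Integrable.mono'
      (g := fun x => ∑ j ∈ Finset.range (q.natDegree + 1), |q.coeff j| * (|x| ^ j * |w x|))
  · apply integrable_finset_sum
    intro j _
    have h := (hmom j).abs
    simp only [abs_mul, abs_pow, abs_abs] at h
    exact h.const_mul _
  · exact ((q.continuous_aeval.comp continuous_id).measurable.mul hm).aestronglyMeasurable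
  · refine Filter.Eventually.of_forall fun x => ?_
    have h1 : |q.eval x| ≤ ∑ j ∈ Finset.range (q.natDegree + 1), |q.coeff j| * |x| ^ j := by
      rw [eval_eq_sum_range]
      refine (Finset.abs_sum_le_sum_abs _ _).trans (le_of_eq ?_)
      exact Finset.sum_congr rfl fun j _ => by rw [abs_mul, abs_pow]
    calc ‖q.eval x * w x‖ = |q.eval x| * |w x| := by
          rw [Real.norm_eq_abs, abs_mul]
      _ ≤ (∑ j ∈ Finset.range (q.natDegree + 1), |q.coeff j| * |x| ^ j) * |w x| :=
          mul_le_mul_of_nonneg_right h1 (abs_nonneg _)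
      _ = _ := by rw [Finset.sum_mul]; exact Finset.sum_congr rfl fun j _ => by ring

lemma key_integral {N : ℕ} (S : Set ℝ) (w : Fin N → ℝ → ℝ) (p : Fin N → ℕ → Polynomial ℝ)
    (hInt : ∀ (k : Fin N) (q : Polynomial ℝ),
      IntegrableOn (fun x => q.eval x * w k x) S volume)
    (M₁ M₂ : Matrix (Fin N) (Fin N) ℝ) (a b : ℕ) (i j : Fin N) :
    Integrable (fun x => (M₁ * diagP p a x * Matrix.diagonal (fun k => w k x)
        * diagP p b x * M₂ᵀ) i j) (volume.restrict S)
    ∧ ∫ x in S, (M₁ * diagP p a x * Matrix.diagonal (fun k => w k x)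
        * diagP p b x * M₂ᵀ) i j
      = (M₁ * Matrix.diagonal
            (fun k => ∫ x in S, (p k a).eval x * (p k b).eval x * w k x) * M₂ᵀ) i j := by
  have hcol : ∀ x, (M₁ * diagP p a x * Matrix.diagonal (fun k => w k x)
      * diagP p b x * M₂ᵀ) i j
      = ∑ k, (M₁ i k * M₂ j k) * (((p k a) * (p k b)).eval x * w k x) := by
    intro x
    rw [Matrix.mul_apply]
    simp only [Matrix.mul_diagonal, Matrix.transpose_apply, diagP]
    exact Finset.sum_congr rfl fun k _ => by rw [eval_mul]; ring
  have hik : ∀ k : Fin N, Integrable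
      (fun x => (M₁ i k * M₂ j k) * (((p k a) * (p k b)).eval x * w k x))
      (volume.restrict S) := fun k => (hInt k _).const_mul _
  constructor
  · simp only [hcol]; exact integrable_finset_sum _ fun k _ => hik k
  · simp only [hcol]
    rw [integral_finset_sum _ fun k _ => hik k, Matrix.mul_apply]
    simp only [Matrix.mul_diagonal, Matrix.transpose_apply]
    refine Finset.sum_congr rfl fun k _ => ?_
    rw [integral_const_mul]
    have h2 : (∫ x in S, ((p k a) * (p k b)).eval x * w k x)
        = ∫ x in S, (p k a).eval x * (p k b).eval x * w k x := by
      refine integral_congr_ae (Filter.Eventually.of_forall fun x => ?_)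
      simp [eval_mul]
    rw [h2]; ring

/- ### Main theorem -/

theorem matQ_squared_norm
    (N : ℕ) (x₀ x₁ : ℝ) (w : Fin N → ℝ → ℝ) (p : Fin N → ℕ → Polynomial ℝ)
    (a : ℕ → ℝ)
    (hmeas : ∀ i, Measurable (w i))
    (hpos : ∀ i, ∀ᵐ x ∂volume, x ∈ Set.Ioo x₀ x₁ → 0 < w i x)
    (hsupp : ∀ i, ∀ x ∉ Set.Ioo x₀ x₁, w i x = 0)
    (hmom : ∀ i (n : ℕ), Integrable (fun x => |x| ^ n * w i x))
    (hmonic : ∀ i n, (p i n).Monic)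
    (hdeg : ∀ i n, (p i n).natDegree = n)
    (horth : ∀ i, ∀ n m : ℕ, n ≠ m →
      ∫ x in Set.Ioo x₀ x₁, (p i n).eval x * (p i m).eval x * w i x = 0)
    (hnorm : ∀ i n, 0 < ∫ x in Set.Ioo x₀ x₁, (p i n).eval x ^ 2 * w i x)
    (ha : ∀ k, 1 ≤ k → k ≤ N - 1 → a k ≠ 0) :
    ∀ n : ℕ, ∀ i j : Fin N,
      ∫ x in Set.Ioo x₀ x₁,
        (matQ (Set.Ioo x₀ x₁) w p a n x * matW w a x *
          (matQ (Set.Ioo x₀ x₁) w p a n x)ᵀ) i j =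
      (nsq (Set.Ioo x₀ x₁) w p n
        + nilA N a * nsq (Set.Ioo x₀ x₁) w p (n + 1) * (nilA N a)ᵀ
        + (if n = 0 then 0 else
            nsq (Set.Ioo x₀ x₁) w p n * (nilA N a)ᵀ *
              (nsq (Set.Ioo x₀ x₁) w p (n - 1))⁻¹ * nilA N a *
              nsq (Set.Ioo x₀ x₁) w p n)) i j := by
  intro n i j
  set S : Set ℝ := Set.Ioo x₀ x₁ with hS
  set A : Matrix (Fin N) (Fin N) ℝ := nilA N a with hA
  set C : Matrix (Fin N) (Fin N) ℝ :=
    if n = 0 then 0 else nsq S w p n * Aᵀ * (nsq S w p (n - 1))⁻¹ with hC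
  set R : ℝ → Matrix (Fin N) (Fin N) ℝ :=
    fun x => diagP p n x + A * diagP p (n + 1) x - C * diagP p (n - 1) x with hR
  have hInt : ∀ (k : Fin N) (q : Polynomial ℝ),
      IntegrableOn (fun x => q.eval x * w k x) S volume :=
    fun k q => (integ_poly_mul (w k) (hmeas k) (hmom k) q).integrableOn
  -- pointwise factorization Qₙ(x) = Rₙ(x)(1 - xA)
  have hfact : ∀ x, matQ S w p a n x = R x * (1 - x • A) := by
    intro x
    simp only [matQ, hR]
    rw [mul_sub, mul_one, Matrix.mul_smul, sub_mul, add_mul,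
      nilA_diagP_nilA a p (n + 1) x]
    simp only [smul_add, smul_sub, smul_zero]
    abel
  -- pointwise Qₙ W Qₙᵀ = Rₙ D Rₙᵀ
  have hpoint : ∀ x, matQ S w p a n x * matW w a x * (matQ S w p a n x)ᵀ
      = R x * Matrix.diagonal (fun k => w k x) * (R x)ᵀ := by
    intro x
    have hA2 : A * A = 0 := nilA_sq N a
    have hTU : (1 - x • A) * (1 + x • A) = 1 := by
      simp [sub_mul, mul_add, Matrix.smul_mul, Matrix.mul_smul, hA2]
    rw [hfact, matW, Matrix.transpose_mul]
    calc R x * (1 - x • A) * ((1 + x • nilA N a) * Matrix.diagonal (fun k => w k x)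
          * (1 + x • nilA N a)ᵀ) * ((1 - x • A)ᵀ * (R x)ᵀ)
        = R x * ((1 - x • A) * (1 + x • A)) * Matrix.diagonal (fun k => w k x)
          * ((1 + x • A)ᵀ * (1 - x • A)ᵀ) * (R x)ᵀ := by
          rw [← hA]; noncomm_ring
      _ = R x * Matrix.diagonal (fun k => w k x) * (R x)ᵀ := by
          rw [hTU, ← Matrix.transpose_mul, hTU]; simp
  -- expand Rₙ D Rₙᵀ into nine terms
  set M : Fin 3 → Matrix (Fin N) (Fin N) ℝ := ![1, A, -C] with hM
  set d : Fin 3 → ℕ := ![n, n + 1, n - 1] with hd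
  have hsum : ∀ x, R x * Matrix.diagonal (fun k => w k x) * (R x)ᵀ
      = ∑ s : Fin 3, ∑ t : Fin 3,
          M s * diagP p (d s) x * Matrix.diagonal (fun k => w k x)
            * diagP p (d t) x * (M t)ᵀ := by
    intro x
    simp only [hR, hM, hd, Fin.sum_univ_three, Matrix.cons_val_zero, Matrix.cons_val_one,
      Matrix.head_cons, Matrix.cons_val_two, Matrix.tail_cons, Matrix.transpose_one,
      Matrix.transpose_neg, Matrix.transpose_add, Matrix.transpose_sub, Matrix.transpose_mul,
      diagP_transpose, Matrix.one_mul, Matrix.mul_one]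
    noncomm_ring
  -- the scalar integrals
  set J : ℕ → ℕ → Fin N → ℝ :=
    fun a' b' k => ∫ x in S, (p k a').eval x * (p k b').eval x * w k x with hJ
  have hJzero : ∀ a' b', a' ≠ b' → Matrix.diagonal (J a' b') = 0 := by
    intro a' b' hab
    have : J a' b' = fun _ => 0 := funext fun k => horth k a' b' hab
    rw [this, Matrix.diagonal_zero]
  have hJaa : ∀ a', Matrix.diagonal (J a' a') = nsq S w p a' := by
    intro a'
    unfold nsq
    refine congrArg Matrix.diagonal (funext fun k => ?_)
    refine integral_congr_ae (Filter.Eventually.of_forall fun x => ?_)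
    simp [pow_two]
  -- integrate
  have hcalc : ∫ x in S, (matQ S w p a n x * matW w a x * (matQ S w p a n x)ᵀ) i j
      = (∑ s : Fin 3, ∑ t : Fin 3,
          M s * Matrix.diagonal (J (d s) (d t)) * (M t)ᵀ) i j := by
    calc ∫ x in S, (matQ S w p a n x * matW w a x * (matQ S w p a n x)ᵀ) i j
        = ∫ x in S, ∑ s : Fin 3, ∑ t : Fin 3,
            (M s * diagP p (d s) x * Matrix.diagonal (fun k => w k x)
              * diagP p (d t) x * (M t)ᵀ) i j := by
          refine integral_congr_ae (Filter.Eventually.of_forall fun x => ?_)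
          show (matQ S w p a n x * matW w a x * (matQ S w p a n x)ᵀ) i j = _
          rw [hpoint x, hsum x]
          simp only [Matrix.sum_apply]
      _ = ∑ s : Fin 3, ∑ t : Fin 3, ∫ x in S,
            (M s * diagP p (d s) x * Matrix.diagonal (fun k => w k x)
              * diagP p (d t) x * (M t)ᵀ) i j := by
          rw [integral_finset_sum _ (fun s _ => integrable_finset_sum _ fun t _ =>
            (key_integral S w p hInt (M s) (M t) (d s) (d t) i j).1)]
          exact Finset.sum_congr rfl fun s _ => integral_finset_sum _ fun t _ =>
            (key_integral S w p hInt (M s) (M t) (d s) (d t) i j).1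
      _ = ∑ s : Fin 3, ∑ t : Fin 3,
            (M s * Matrix.diagonal (J (d s) (d t)) * (M t)ᵀ) i j :=
          Finset.sum_congr rfl fun s _ => Finset.sum_congr rfl fun t _ =>
            (key_integral S w p hInt (M s) (M t) (d s) (d t) i j).2
      _ = _ := by simp only [Matrix.sum_apply]
  rw [hcalc]
  suffices hfin : (∑ s : Fin 3, ∑ t : Fin 3, M s * Matrix.diagonal (J (d s) (d t)) * (M t)ᵀ)
      = nsq S w p n + nilA N a * nsq S w p (n + 1) * (nilA N a)ᵀ
        + (if n = 0 then 0 else nsq S w p n * (nilA N a)ᵀ * (nsq S w p (n - 1))⁻¹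
            * nilA N a * nsq S w p n) by rw [hfin]
  -- evaluate the nine matrix terms
  rcases Nat.eq_zero_or_pos n with hn | hn
  · subst hn
    have hC0 : C = 0 := by rw [hC, if_pos rfl]
    simp only [hM, hd, Fin.sum_univ_three, Matrix.cons_val_zero, Matrix.cons_val_one,
      Matrix.head_cons, Matrix.cons_val_two, Matrix.tail_cons, hC0, neg_zero,
      Matrix.transpose_zero, Matrix.transpose_one, Matrix.zero_mul, Matrix.mul_zero,
      Matrix.one_mul, Matrix.mul_one, if_pos rfl]
    rw [hJzero 0 1 (by omega), hJzero 1 0 (by omega), hJaa 0, hJaa 1]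
    simp
    rfl
  · obtain ⟨m, rfl⟩ : ∃ m, n = m + 1 := ⟨n - 1, by omega⟩
    have hC1 : C = nsq S w p (m + 1) * Aᵀ * (nsq S w p m)⁻¹ := by
      rw [hC, if_neg (by omega)]; simp
    have hinv : (nsq S w p m)⁻¹ * nsq S w p m = 1 := by
      apply Matrix.nonsing_inv_mul
      rw [nsq, Matrix.det_diagonal]
      exact isUnit_iff_ne_zero.mpr (Finset.prod_pos fun k _ => hnorm k m).ne'
    have hnsqT : ∀ r, (nsq S w p r)ᵀ = nsq S w p r := fun r => Matrix.diagonal_transpose _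
    have hCT : Cᵀ = (nsq S w p m)⁻¹ * A * nsq S w p (m + 1) := by
      rw [hC1, Matrix.transpose_mul, Matrix.transpose_mul, Matrix.transpose_transpose,
        Matrix.transpose_nonsing_inv, hnsqT, hnsqT, Matrix.mul_assoc]
    have hCC : (-C) * nsq S w p m * (-C)ᵀ
        = nsq S w p (m + 1) * Aᵀ * (nsq S w p m)⁻¹ * A * nsq S w p (m + 1) := by
      rw [Matrix.transpose_neg, Matrix.neg_mul, Matrix.neg_mul, Matrix.mul_neg, neg_neg,
        hCT, hC1]
      calc nsq S w p (m + 1) * Aᵀ * (nsq S w p m)⁻¹ * nsq S w p m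
            * ((nsq S w p m)⁻¹ * A * nsq S w p (m + 1))
          = nsq S w p (m + 1) * Aᵀ * ((nsq S w p m)⁻¹ * nsq S w p m * (nsq S w p m)⁻¹)
            * A * nsq S w p (m + 1) := by noncomm_ring
        _ = _ := by rw [hinv, one_mul]
    simp only [hM, hd, Fin.sum_univ_three, Matrix.cons_val_zero, Matrix.cons_val_one,
      Matrix.head_cons, Matrix.cons_val_two, Matrix.tail_cons, Matrix.transpose_one,
      Matrix.one_mul, Matrix.mul_one, if_neg (by omega : ¬ m + 1 = 0)]
    rw [show m + 1 - 1 = m from rfl]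
    rw [hJzero (m + 1) (m + 1 + 1) (by omega), hJzero (m + 1) m (by omega),
      hJzero (m + 1 + 1) (m + 1) (by omega), hJzero (m + 1 + 1) m (by omega),
      hJzero m (m + 1) (by omega), hJzero m (m + 1 + 1) (by omega),
      hJaa (m + 1), hJaa (m + 1 + 1), hJaa m, hCC]
    simp only [Matrix.mul_zero, Matrix.zero_mul, add_zero, zero_add]
    rfl
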